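/- (Commutative case of Theorem 3.7.) Let (Ω,Σ,μ) be a σ-finite measure space and let a_n : L^∞(Ω,μ;ℂ) → L⁰(Ω,μ;ℂ) be a sequence of additive maps which is uniformly equicontinuous at 0 on the unit ball { x ∈ L^∞ : ‖x‖_∞ ≤ 1 }. Then the set C = { x ∈ L^∞ : ‖x‖_∞ ≤ 1 and (a_n(x))_n converges almost uniformly } is sequentially closed in the unit ball with respect to the measure topology: if x_k ∈ C, ‖x‖_∞ ≤ 1, and x_k → x in the measure topology, then (a_n(x))_n converges almost uniformly. -/

import Mathlib

open MeasureTheory Filter Topology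
open scoped ENNReal

/-- `gs k → g` in the measure topology. -/
def TendstoMeasTop {Ω : Type*} [MeasurableSpace Ω] (μ : Measure Ω)
    (gs : ℕ → Ω → ℂ) (g : Ω → ℂ) : Prop :=
  ∀ ε δ : ℝ, 0 < ε → 0 < δ → ∃ K : ℕ, ∀ k ≥ K, ∃ E : Set Ω, MeasurableSet E ∧
    μ Eᶜ ≤ ENNReal.ofReal ε ∧ ∀ᵐ ω ∂μ.restrict E, ‖gs k ω - g ω‖ ≤ δ

/-- `gs n → g` almost uniformly. -/
def ConvAU {Ω : Type*} [MeasurableSpace Ω] (μ : Measure Ω) (gs : ℕ → Ω → ℂ) (g : Ω → ℂ) :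
    Prop :=
  ∀ ε : ℝ, 0 < ε → ∃ E : Set Ω, MeasurableSet E ∧ μ Eᶜ ≤ ENNReal.ofReal ε ∧
    Filter.Tendsto (fun n => essSup (fun ω => (‖gs n ω - g ω‖₊ : ℝ≥0∞)) (μ.restrict E))
      Filter.atTop (nhds 0)

/-- Uniform equicontinuity at `0` on `E ⊆ L^∞` of the maps `a_n : L^∞ → L⁰`. -/
def UnifEquicont {Ω : Type*} [MeasurableSpace Ω] (μ : Measure Ω)
    (a : ℕ → (Lp ℂ ⊤ μ) → (Ω →ₘ[μ] ℂ)) (E : Set (Lp ℂ ⊤ μ)) : Prop :=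
  ∀ ε δ : ℝ, 0 < ε → 0 < δ → ∃ γ : ℝ, 0 < γ ∧ ∀ x ∈ E,
    (∃ F : Set Ω, MeasurableSet F ∧ μ Fᶜ ≤ ENNReal.ofReal γ ∧
      ∀ᵐ ω ∂μ.restrict F, ‖(x : Ω → ℂ) ω‖ ≤ γ) →
    ∃ G : Set Ω, MeasurableSet G ∧ μ Gᶜ ≤ ENNReal.ofReal ε ∧
      ∀ n, essSup (fun ω => (‖(a n x : Ω → ℂ) ω‖₊ : ℝ≥0∞)) (μ.restrict G) ≤
        ENNReal.ofReal δ

lemma ofReal_half_pow (j : ℕ) : ENNReal.ofReal ((2⁻¹:ℝ)^j) = (2⁻¹:ℝ≥0∞)^j := by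
  rw [ENNReal.ofReal_pow (by norm_num)]
  congr 1
  rw [ENNReal.ofReal_inv_of_pos (by norm_num)]
  norm_num

/-- Almost-uniform Cauchy implies almost-uniform convergence to some measurable limit. -/
lemma auCauchy_convAU {Ω : Type*} [MeasurableSpace Ω] (μ : Measure Ω) (f : ℕ → Ω → ℂ)
    (hf : ∀ n, AEMeasurable (f n) μ)
    (hC : ∀ ε δ : ℝ, 0 < ε → 0 < δ → ∃ E : Set Ω, MeasurableSet E ∧
      μ Eᶜ ≤ ENNReal.ofReal ε ∧ ∃ N : ℕ, ∀ n ≥ N, ∀ m ≥ N,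
        ∀ᵐ ω ∂μ, ω ∈ E → ‖f n ω - f m ω‖ ≤ δ) :
    ∃ g : Ω → ℂ, Measurable g ∧ ConvAU μ f g := by
  have half_pos : ∀ j : ℕ, (0:ℝ) < (2⁻¹:ℝ)^j := fun j => by positivity
  -- Step 1: a.e. existence of a limit
  have key : ∀ j : ℕ, ∃ E : Set Ω, MeasurableSet E ∧ μ Eᶜ ≤ ENNReal.ofReal ((2⁻¹:ℝ)^j) ∧
      ∃ N : ℕ, ∀ n ≥ N, ∀ m ≥ N,
        ∀ᵐ ω ∂μ, ω ∈ E → ‖f n ω - f m ω‖ ≤ (2⁻¹:ℝ)^j :=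
    fun j => hC _ _ (half_pos j) (half_pos j)
  choose E hEm hEμ N hE using key
  have hBC : ∀ᵐ ω ∂μ, ∀ᶠ j in atTop, ω ∉ (E j)ᶜ := by
    apply MeasureTheory.ae_eventually_notMem
    intro htop
    have hle : ∑' j, μ (E j)ᶜ ≤ ∑' j : ℕ, (2⁻¹:ℝ≥0∞)^j :=
      ENNReal.tsum_le_tsum fun j => (hEμ j).trans (le_of_eq (ofReal_half_pow j))
    rw [htop, ENNReal.tsum_geometric, ENNReal.one_sub_inv_two, inv_inv] at hle
    exact (by norm_num : ¬ ((⊤:ℝ≥0∞) ≤ 2)) hle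
  have hEae : ∀ᵐ ω ∂μ, ∀ j n m : ℕ, N j ≤ n → N j ≤ m → ω ∈ E j →
      ‖f n ω - f m ω‖ ≤ (2⁻¹:ℝ)^j := by
    rw [ae_all_iff]; intro j
    rw [ae_all_iff]; intro n
    rw [ae_all_iff]; intro m
    by_cases hn : N j ≤ n
    · by_cases hm : N j ≤ m
      · filter_upwards [hE j n hn m hm] with ω hω _ _
        exact hω
      · exact Eventually.of_forall fun ω _ hm' _ => absurd hm' hm
    · exact Eventually.of_forall fun ω hn' _ _ => absurd hn' hn
  have hcauchy : ∀ᵐ ω ∂μ, ∃ l : ℂ, Tendsto (fun n => f n ω) atTop (𝓝 l) := by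
    filter_upwards [hBC, hEae] with ω hω1 hω2
    apply cauchySeq_tendsto_of_complete
    rw [Metric.cauchySeq_iff]
    intro η hη
    obtain ⟨j₀, hj₀⟩ := exists_pow_lt_of_lt_one hη (by norm_num : (2⁻¹:ℝ) < 1)
    obtain ⟨J, hJ⟩ := eventually_atTop.mp hω1
    set j := max j₀ J with hj
    have hmem : ω ∈ E j := by
      have := hJ j (le_max_right _ _); simpa using this
    refine ⟨N j, fun m hm n hn => ?_⟩
    rw [dist_eq_norm]
    calc ‖f m ω - f n ω‖ ≤ (2⁻¹:ℝ)^j := hω2 j m n hm hn hmem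
      _ ≤ (2⁻¹:ℝ)^j₀ :=
        pow_le_pow_of_le_one (by norm_num) (by norm_num) (le_max_left _ _)
      _ < η := hj₀
  obtain ⟨g, hgm, hg⟩ := measurable_limit_of_tendsto_metrizable_ae hf hcauchy
  refine ⟨g, hgm, ?_⟩
  intro ε hε
  have key2 : ∀ j : ℕ, ∃ E' : Set Ω, MeasurableSet E' ∧
      μ E'ᶜ ≤ ENNReal.ofReal (ε * (2⁻¹:ℝ)^(j+1)) ∧ ∃ N' : ℕ, ∀ n ≥ N', ∀ m ≥ N',
        ∀ᵐ ω ∂μ, ω ∈ E' → ‖f n ω - f m ω‖ ≤ (2⁻¹:ℝ)^j :=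
    fun j => hC _ _ (by positivity) (half_pos j)
  choose E' hE'm hE'μ N' hE' using key2
  have hEinter : MeasurableSet (⋂ j, E' j) := MeasurableSet.iInter hE'm
  refine ⟨⋂ j, E' j, hEinter, ?_, ?_⟩
  · rw [Set.compl_iInter]
    refine (measure_iUnion_le _).trans ?_
    have hle : ∑' j, μ (E' j)ᶜ ≤ ∑' j : ℕ, ENNReal.ofReal ε * (2⁻¹:ℝ≥0∞)^(j+1) := by
      refine ENNReal.tsum_le_tsum fun j => (hE'μ j).trans (le_of_eq ?_)
      rw [ENNReal.ofReal_mul hε.le, ofReal_half_pow (j+1)]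
    refine hle.trans ?_
    rw [ENNReal.tsum_mul_left, ENNReal.tsum_geometric_add_one, ENNReal.one_sub_inv_two,
      inv_inv]
    rw [ENNReal.inv_mul_cancel (by norm_num) (by norm_num), mul_one]
  · rw [ENNReal.tendsto_atTop_zero]
    intro η hη
    obtain ⟨j, hj⟩ := ENNReal.exists_inv_two_pow_lt (ne_of_gt hη)
    refine ⟨N' j, fun n hn => ?_⟩
    have hae : ∀ᵐ ω ∂μ, ω ∈ (⋂ i, E' i) → ‖f n ω - g ω‖ ≤ (2⁻¹:ℝ)^j := by
      have hall : ∀ᵐ ω ∂μ, ∀ m, N' j ≤ m → (ω ∈ E' j → ‖f n ω - f m ω‖ ≤ (2⁻¹:ℝ)^j) := by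
        rw [ae_all_iff]; intro m
        by_cases hm : N' j ≤ m
        · filter_upwards [hE' j n hn m hm] with ω hω _; exact hω
        · exact Eventually.of_forall fun ω hm' => absurd hm' hm
      filter_upwards [hall, hg] with ω hω htend hmem
      have hmemj : ω ∈ E' j := Set.mem_iInter.mp hmem j
      have hT : Tendsto (fun m => ‖f n ω - f m ω‖) atTop (𝓝 ‖f n ω - g ω‖) :=
        (tendsto_const_nhds.sub htend).norm
      exact le_of_tendsto hT (eventually_atTop.mpr ⟨N' j, fun m hm => hω m hm hmemj⟩)
    have hess : essSup (fun ω => (‖f n ω - g ω‖₊ : ℝ≥0∞)) (μ.restrict (⋂ i, E' i)) ≤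
        ENNReal.ofReal ((2⁻¹:ℝ)^j) := by
      refine essSup_le_of_ae_le _ ?_
      have hres : ∀ᵐ ω ∂μ.restrict (⋂ i, E' i), ‖f n ω - g ω‖ ≤ (2⁻¹:ℝ)^j :=
        (ae_restrict_iff' hEinter).mpr hae
      filter_upwards [hres] with ω hω
      rw [← enorm_eq_nnnorm, ← ofReal_norm]
      exact ENNReal.ofReal_le_ofReal hω
    exact hess.trans (le_of_lt (lt_of_le_of_lt (le_of_eq (ofReal_half_pow j)) hj))

/-- Theorem 3.7 (commutative): if a sequence of additive maps `a_n : L^∞ → L⁰` is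
uniformly equicontinuous at `0` on the unit ball, then the set
`C = { x : ‖x‖_∞ ≤ 1, (a_n(x))_n converges a.u. }` is sequentially closed in the unit
ball with respect to the measure topology. -/
theorem stmt_17 {Ω : Type*} [MeasurableSpace Ω] (μ : Measure Ω) [SigmaFinite μ]
    (a : ℕ → (Lp ℂ ⊤ μ) → (Ω →ₘ[μ] ℂ))
    (ha_add : ∀ n (x y : Lp ℂ ⊤ μ), a n (x + y) = a n x + a n y)
    (h : UnifEquicont μ a {x : Lp ℂ ⊤ μ | ‖x‖ ≤ 1})
    (xs : ℕ → Lp ℂ ⊤ μ) (x : Lp ℂ ⊤ μ)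
    (hxs_ball : ∀ k, ‖xs k‖ ≤ 1)
    (hxs_conv : ∀ k, ∃ g : Ω → ℂ, Measurable g ∧
      ConvAU μ (fun n ω => (a n (xs k) : Ω → ℂ) ω) g)
    (hx_ball : ‖x‖ ≤ 1)
    (hxs_x : TendstoMeasTop μ (fun k ω => (xs k : Ω → ℂ) ω) (fun ω => (x : Ω → ℂ) ω)) :
    ∃ g : Ω → ℂ, Measurable g ∧ ConvAU μ (fun n ω => (a n x : Ω → ℂ) ω) g := by
  apply auCauchy_convAU μ _ (fun n => (a n x).aemeasurable)
  intro ε δ hε hδ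
  obtain ⟨γ, hγ, hγ'⟩ := h (ε/2) (δ/6) (by linarith) (by linarith)
  obtain ⟨K, hK⟩ := hxs_x γ γ hγ hγ
  obtain ⟨F, hFm, hFμ, hFae⟩ := hK K le_rfl
  set y : Lp ℂ ⊤ μ := (2⁻¹ : ℂ) • (x - xs K) with hy
  have hy_ball : y ∈ {z : Lp ℂ ⊤ μ | ‖z‖ ≤ 1} := by
    have h2 : ‖(2⁻¹:ℂ)‖ = 2⁻¹ := by norm_num
    have h3 : ‖x - xs K‖ ≤ 2 := (norm_sub_le _ _).trans (by linarith [hxs_ball K])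
    simp only [Set.mem_setOf_eq, hy, norm_smul, h2]
    linarith
  have hyF : ∃ F' : Set Ω, MeasurableSet F' ∧ μ F'ᶜ ≤ ENNReal.ofReal γ ∧
      ∀ᵐ ω ∂μ.restrict F', ‖(y : Ω → ℂ) ω‖ ≤ γ := by
    refine ⟨F, hFm, hFμ, ?_⟩
    have hcoe : (y : Ω → ℂ) =ᵐ[μ] fun ω =>
        (2⁻¹:ℂ) * ((x : Ω → ℂ) ω - (xs K : Ω → ℂ) ω) := by
      filter_upwards [Lp.coeFn_smul (2⁻¹:ℂ) (x - xs K), Lp.coeFn_sub x (xs K)] with ω h1 h2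
      rw [hy, h1, Pi.smul_apply, h2, Pi.sub_apply, smul_eq_mul]
    filter_upwards [ae_restrict_of_ae hcoe, hFae] with ω h1 h2
    rw [h1]
    have h3 : ‖(x : Ω → ℂ) ω - (xs K : Ω → ℂ) ω‖ ≤ γ := by
      rw [norm_sub_rev]; exact h2
    rw [norm_mul]
    have h4 : ‖(2⁻¹:ℂ)‖ = 2⁻¹ := by norm_num
    rw [h4]
    nlinarith [norm_nonneg ((x : Ω → ℂ) ω - (xs K : Ω → ℂ) ω)]
  obtain ⟨G, hGm, hGμ, hG⟩ := hγ' y hy_ball hyF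
  obtain ⟨gk, hgkm, hgk⟩ := hxs_conv K
  obtain ⟨E₁, hE₁m, hE₁μ, htend⟩ := hgk (ε/2) (by linarith)
  obtain ⟨Nn, hNn⟩ := ENNReal.tendsto_atTop_zero.mp htend (ENNReal.ofReal (δ/6))
    (ENNReal.ofReal_pos.mpr (by linarith))
  refine ⟨G ∩ E₁, hGm.inter hE₁m, ?_, Nn, ?_⟩
  · rw [Set.compl_inter]
    refine (measure_union_le _ _).trans ?_
    calc μ Gᶜ + μ E₁ᶜ ≤ ENNReal.ofReal (ε/2) + ENNReal.ofReal (ε/2) := add_le_add hGμ hE₁μ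
      _ = ENNReal.ofReal ε := by
        rw [← ENNReal.ofReal_add (by linarith) (by linarith)]; norm_num
  · intro n hn m hm
    have hyb : ∀ p : ℕ, ∀ᵐ ω ∂μ, ω ∈ G → ‖(a p y : Ω → ℂ) ω‖ ≤ δ/6 := by
      intro p
      have h1 : ∀ᵐ ω ∂μ.restrict G, (‖(a p y : Ω → ℂ) ω‖₊ : ℝ≥0∞) ≤ ENNReal.ofReal (δ/6) :=
        (ENNReal.ae_le_essSup _).mono fun ω hω => hω.trans (hG p)
      rw [ae_restrict_iff' hGm] at h1
      filter_upwards [h1] with ω hω hmem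
      have := hω hmem
      rwa [← enorm_eq_nnnorm, ← ofReal_norm, ENNReal.ofReal_le_ofReal_iff (by linarith)] at this
    have hkb : ∀ p, Nn ≤ p → ∀ᵐ ω ∂μ, ω ∈ E₁ →
        ‖(a p (xs K) : Ω → ℂ) ω - gk ω‖ ≤ δ/6 := by
      intro p hp
      have h1 : ∀ᵐ ω ∂μ.restrict E₁,
          (‖(a p (xs K) : Ω → ℂ) ω - gk ω‖₊ : ℝ≥0∞) ≤ ENNReal.ofReal (δ/6) :=
        (ENNReal.ae_le_essSup _).mono fun ω hω => hω.trans (hNn p hp)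
      rw [ae_restrict_iff' hE₁m] at h1
      filter_upwards [h1] with ω hω hmem
      have := hω hmem
      rwa [← enorm_eq_nnnorm, ← ofReal_norm, ENNReal.ofReal_le_ofReal_iff (by linarith)] at this
    have hdec : ∀ p : ℕ, (a p x : Ω → ℂ) =ᵐ[μ] fun ω =>
        (a p (xs K) : Ω → ℂ) ω + ((a p y : Ω → ℂ) ω + (a p y : Ω → ℂ) ω) := by
      intro p
      have hyy : y + y = x - xs K := by
        rw [hy, ← add_smul]
        have : (2⁻¹ + 2⁻¹ : ℂ) = 1 := by norm_num
        rw [this, one_smul]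
      have h2 : xs K + (y + y) = x := by rw [hyy]; abel
      have h1 : a p x = a p (xs K) + (a p y + a p y) := by
        calc a p x = a p (xs K + (y + y)) := by rw [h2]
          _ = a p (xs K) + a p (y + y) := ha_add p _ _
          _ = a p (xs K) + (a p y + a p y) := by rw [ha_add]
      rw [h1]
      filter_upwards [AEEqFun.coeFn_add (a p (xs K)) (a p y + a p y),
        AEEqFun.coeFn_add (a p y) (a p y)] with ω e1 e2
      rw [e1, Pi.add_apply, e2, Pi.add_apply]
    filter_upwards [hyb n, hyb m, hkb n hn, hkb m hm, hdec n, hdec m]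
      with ω h1 h2 h3 h4 h5 h6 hmem
    obtain ⟨hmG, hmE⟩ := hmem
    have b1 := h1 hmG
    have b2 := h2 hmG
    have b3 := h3 hmE
    have b4 := h4 hmE
    rw [h5, h6]
    set A := (a n (xs K) : Ω → ℂ) ω
    set B := (a m (xs K) : Ω → ℂ) ω
    set v := (a n y : Ω → ℂ) ω
    set w := (a m y : Ω → ℂ) ω
    have hrw : (A + (v + v)) - (B + (w + w)) =
        ((A - gk ω) - (B - gk ω)) + ((v + v) - (w + w)) := by ring
    rw [hrw]
    refine (norm_add_le _ _).trans ?_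
    have t1 : ‖(A - gk ω) - (B - gk ω)‖ ≤ δ/6 + δ/6 :=
      (norm_sub_le _ _).trans (add_le_add b3 b4)
    have t2 : ‖(v + v) - (w + w)‖ ≤ (δ/6 + δ/6) + (δ/6 + δ/6) :=
      (norm_sub_le _ _).trans
        (add_le_add ((norm_add_le _ _).trans (add_le_add b1 b1))
          ((norm_add_le _ _).trans (add_le_add b2 b2)))
    linarith
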